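/- arXiv:2504.20586 — 2 statements merged into one kernel-verified Lean document; each statement's English description precedes it below -/
import Mathlib

section
/- For every real p with 0 < p < 1, the vector t = (1 + p/(1−p) + (1−p)/p, 1/(1−p), 1/p) is the unique solution of the linear system (I − Q)·t = (1, 1, 1), where Q = [[0, p, 1−p], [0, p, 0], [0, 0, 1−p]]. -/
theorem expected_absorption_time_unique_solution (p : ℝ) (hp0 : 0 < p) (hp1 : p < 1) :
    ((1 : Matrix (Fin 3) (Fin 3) ℝ) - !![0, p, 1 - p; 0, p, 0; 0, 0, 1 - p]).mulVec
        ![1 + p / (1 - p) + (1 - p) / p, 1 / (1 - p), 1 / p] = ![1, 1, 1] ∧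
    ∀ t : Fin 3 → ℝ,
      ((1 : Matrix (Fin 3) (Fin 3) ℝ) - !![0, p, 1 - p; 0, p, 0; 0, 0, 1 - p]).mulVec t
        = ![1, 1, 1] →
      t = ![1 + p / (1 - p) + (1 - p) / p, 1 / (1 - p), 1 / p] := by
  have hp : p ≠ 0 := ne_of_gt hp0
  have hp1' : (1 : ℝ) - p ≠ 0 := by linarith
  constructor
  · funext i
    fin_cases i <;>
      simp [Matrix.mulVec, dotProduct, Fin.sum_univ_succ, Matrix.one_apply] <;>
      field_simp <;> ring
  · intro t ht
    have h0 := congrFun ht 0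
    have h1 := congrFun ht 1
    have h2 := congrFun ht 2
    simp [Matrix.mulVec, dotProduct, Fin.sum_univ_succ, Matrix.one_apply] at h0 h1 h2
    funext i
    fin_cases i <;> simp <;> field_simp <;> nlinarith [h0, h1, h2]
end

section
/- Let (Ω, 𝓕, P) be a probability space, n a positive natural number, and W₁, …, Wₙ square-integrable real random variables with Cov(Wᵢ, Wⱼ) = 0 whenever i ≠ j, where Cov(X, Y) = E[XY] − E[X]E[Y] and Var(X) = Cov(X, X). For a subset T ⊆ {1, …, n}, define W̃ᵢ = Wᵢ for i ∈ T and W̃ᵢ = −Wᵢ for i ∉ T, and let Cov_T = Cov((1/n)·Σᵢ Wᵢ, (1/n)·Σⱼ W̃ⱼ). Then Cov_T = Cov_∅ + (2/n²)·Σ_{i ∈ T} Var(Wᵢ); in particular Cov_T ≥ Cov_∅, with strict inequality whenever Var(Wᵢ) > 0 for some i ∈ T. -/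
open MeasureTheory

/-- Covariance of the two group sample means when, for indices in `T`, the
second weight equals `W i` (same sign) and for indices outside `T` it equals
`-W i` (opposite sign), with `Cov(X, Y) = E[XY] - E[X]E[Y]`. -/
noncomputable def covFlip {Ω : Type*} [MeasurableSpace Ω] (P : Measure Ω)
    (n : ℕ) (W : Fin n → Ω → ℝ) (T : Finset (Fin n)) : ℝ :=
  (∫ ω, ((1 / (n : ℝ)) * ∑ i, W i ω) *
      ((1 / (n : ℝ)) * ∑ j, (if j ∈ T then W j ω else -W j ω)) ∂P)
    - (∫ ω, (1 / (n : ℝ)) * ∑ i, W i ω ∂P) *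
      (∫ ω, (1 / (n : ℝ)) * ∑ j, (if j ∈ T then W j ω else -W j ω) ∂P)

section Aux

variable {Ω : Type*} [MeasurableSpace Ω] (P : Measure Ω) [IsProbabilityMeasure P]

lemma intMul {f g : Ω → ℝ} (hf : MemLp f 2 P) (hg : MemLp g 2 P) :
    Integrable (fun ω => f ω * g ω) P := by
  have : MemLp (f • g) 1 P :=
    haveI : ENNReal.HolderTriple 2 2 1 := ⟨by rw [ENNReal.inv_two_add_inv_two, inv_one]⟩
    hg.smul hf
  exact this.integrable le_rfl

lemma var_nonneg {f : Ω → ℝ} (hf : MemLp f 2 P) :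
    0 ≤ (∫ ω, f ω * f ω ∂P) - (∫ ω, f ω ∂P) * (∫ ω, f ω ∂P) := by
  set μ := ∫ ω, f ω ∂P with hμ
  have hint : Integrable f P := hf.integrable one_le_two
  have hff : Integrable (fun ω => f ω * f ω) P := intMul P hf hf
  have key : (∫ ω, (f ω - μ) ^ 2 ∂P) = (∫ ω, f ω * f ω ∂P) - μ * μ := by
    have : (fun ω => (f ω - μ) ^ 2)
        = fun ω => f ω * f ω - (2 * μ) * f ω + μ ^ 2 := by
      funext ω; ring
    have hsub : Integrable (fun ω => f ω * f ω - 2 * μ * f ω) P :=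
      hff.sub (hint.const_mul _)
    rw [this, integral_add hsub (integrable_const _),
      integral_sub hff (hint.const_mul _), integral_const_mul, integral_const]
    simp [measure_univ]
    ring
  rw [← key]
  exact integral_nonneg fun ω => sq_nonneg _

lemma covFlip_eq {n : ℕ} (W : Fin n → Ω → ℝ) (hW : ∀ i, MemLp (W i) 2 P)
    (hcov : ∀ i j, i ≠ j →
      (∫ ω, W i ω * W j ω ∂P) - (∫ ω, W i ω ∂P) * (∫ ω, W j ω ∂P) = 0)
    (T : Finset (Fin n)) :
    covFlip P n W T = (1 / (n : ℝ)) ^ 2 * ∑ i, (if i ∈ T then (1 : ℝ) else -1) *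
      ((∫ ω, W i ω * W i ω ∂P) - (∫ ω, W i ω ∂P) * (∫ ω, W i ω ∂P)) := by
  classical
  set ε : Fin n → ℝ := fun j => if j ∈ T then (1 : ℝ) else -1 with hε
  have hint : ∀ i, Integrable (W i) P := fun i => (hW i).integrable one_le_two
  have hmul : ∀ i j, Integrable (fun ω => W i ω * W j ω) P :=
    fun i j => intMul P (hW i) (hW j)
  have hflip : ∀ j (ω : Ω), (if j ∈ T then W j ω else -W j ω) = ε j * W j ω := by
    intro j ω; by_cases h : j ∈ T <;> simp [hε, h]
  have h1 : (∫ ω, (1 / (n : ℝ)) * ∑ i, W i ω ∂P)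
      = (1 / (n : ℝ)) * ∑ i, ∫ ω, W i ω ∂P := by
    rw [integral_const_mul, integral_finset_sum _ fun i _ => hint i]
  have h2 : (∫ ω, (1 / (n : ℝ)) * ∑ j, (if j ∈ T then W j ω else -W j ω) ∂P)
      = (1 / (n : ℝ)) * ∑ j, ε j * ∫ ω, W j ω ∂P := by
    simp_rw [hflip]
    rw [integral_const_mul, integral_finset_sum _ fun j _ => (hint j).const_mul _]
    simp_rw [integral_const_mul]
  have h3 : (∫ ω, ((1 / (n : ℝ)) * ∑ i, W i ω) *
      ((1 / (n : ℝ)) * ∑ j, (if j ∈ T then W j ω else -W j ω)) ∂P)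
      = (1 / (n : ℝ)) ^ 2 * ∑ i, ∑ j, ε j * ∫ ω, W i ω * W j ω ∂P := by
    have heq : ∀ ω, ((1 / (n : ℝ)) * ∑ i, W i ω) *
        ((1 / (n : ℝ)) * ∑ j, (if j ∈ T then W j ω else -W j ω))
        = (1 / (n : ℝ)) ^ 2 * ∑ i, ∑ j, ε j * (W i ω * W j ω) := by
      intro ω
      simp_rw [hflip]
      rw [show ∀ A B : ℝ, ((1 / (n : ℝ)) * A) * ((1 / (n : ℝ)) * B)
          = (1 / (n : ℝ)) ^ 2 * (A * B) from fun A B => by ring]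
      rw [Finset.sum_mul_sum]
      congr 1
      exact Finset.sum_congr rfl fun i _ => Finset.sum_congr rfl fun j _ => by ring
    simp_rw [heq]
    rw [integral_const_mul, integral_finset_sum _ fun i _ =>
      integrable_finset_sum _ fun j _ => (hmul i j).const_mul _]
    congr 1
    refine Finset.sum_congr rfl fun i _ => ?_
    rw [integral_finset_sum _ fun j _ => (hmul i j).const_mul _]
    simp_rw [integral_const_mul]
  rw [covFlip, h1, h2, h3]
  have hdiag : ∑ i, ∑ j, ε j * ∫ ω, W i ω * W j ω ∂P
      - (∑ i, ∫ ω, W i ω ∂P) * (∑ j, ε j * ∫ ω, W j ω ∂P)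
      = ∑ i, ε i * ((∫ ω, W i ω * W i ω ∂P)
          - (∫ ω, W i ω ∂P) * (∫ ω, W i ω ∂P)) := by
    rw [Finset.sum_mul_sum, ← Finset.sum_sub_distrib]
    refine Finset.sum_congr rfl fun i _ => ?_
    rw [← Finset.sum_sub_distrib]
    rw [Finset.sum_eq_single i]
    · ring
    · intro j _ hj
      have := hcov i j (fun h => hj (h.symm ▸ rfl))
      have : (∫ ω, W i ω * W j ω ∂P) = (∫ ω, W i ω ∂P) * (∫ ω, W j ω ∂P) := by
        linarith
      rw [this]; ring
    · intro h; exact absurd (Finset.mem_univ i) h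
  calc (1 / (n : ℝ)) ^ 2 * (∑ i, ∑ j, ε j * ∫ ω, W i ω * W j ω ∂P)
        - (1 / (n : ℝ)) * (∑ i, ∫ ω, W i ω ∂P)
          * ((1 / (n : ℝ)) * ∑ j, ε j * ∫ ω, W j ω ∂P)
      = (1 / (n : ℝ)) ^ 2 * (∑ i, ∑ j, ε j * ∫ ω, W i ω * W j ω ∂P
          - (∑ i, ∫ ω, W i ω ∂P) * (∑ j, ε j * ∫ ω, W j ω ∂P)) := by ring
    _ = _ := by rw [hdiag]

end Aux

theorem gas_cov_is_minimal
    {Ω : Type*} [MeasurableSpace Ω] (P : Measure Ω) [IsProbabilityMeasure P]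
    (n : ℕ) (hn : 0 < n) (W : Fin n → Ω → ℝ)
    (hW : ∀ i, MemLp (W i) 2 P)
    (hcov : ∀ i j, i ≠ j →
      (∫ ω, W i ω * W j ω ∂P) - (∫ ω, W i ω ∂P) * (∫ ω, W j ω ∂P) = 0)
    (T : Finset (Fin n)) :
    covFlip P n W T = covFlip P n W ∅
        + (2 / (n : ℝ) ^ 2) *
            ∑ i ∈ T, ((∫ ω, W i ω * W i ω ∂P) - (∫ ω, W i ω ∂P) * (∫ ω, W i ω ∂P)) ∧
    covFlip P n W ∅ ≤ covFlip P n W T ∧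
    ((∃ i ∈ T, 0 < (∫ ω, W i ω * W i ω ∂P) - (∫ ω, W i ω ∂P) * (∫ ω, W i ω ∂P)) →
      covFlip P n W ∅ < covFlip P n W T) := by
  classical
  set V : Fin n → ℝ := fun i =>
    (∫ ω, W i ω * W i ω ∂P) - (∫ ω, W i ω ∂P) * (∫ ω, W i ω ∂P) with hV
  have hT : covFlip P n W T
      = (1 / (n : ℝ)) ^ 2 * ∑ i, (if i ∈ T then (1 : ℝ) else -1) * V i :=
    covFlip_eq P W hW hcov T
  have hE : covFlip P n W ∅
      = (1 / (n : ℝ)) ^ 2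
        * ∑ i, (if i ∈ (∅ : Finset (Fin n)) then (1 : ℝ) else -1) * V i :=
    covFlip_eq P W hW hcov ∅
  have hn' : (n : ℝ) ≠ 0 := Nat.cast_ne_zero.mpr hn.ne'
  have hsum : ∑ i, (if i ∈ T then (1 : ℝ) else -1) * V i
      = ∑ i, (if i ∈ (∅ : Finset (Fin n)) then (1 : ℝ) else -1) * V i
        + 2 * ∑ i ∈ T, V i := by
    rw [← sub_eq_iff_eq_add', ← Finset.sum_sub_distrib]
    have h : ∀ i, (if i ∈ T then (1 : ℝ) else -1) * V i
        - (if i ∈ (∅ : Finset (Fin n)) then (1 : ℝ) else -1) * V i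
        = if i ∈ T then 2 * V i else 0 := by
      intro i; by_cases h : i ∈ T <;> simp [h] <;> try ring
    simp_rw [h]
    rw [Finset.sum_ite_mem, Finset.univ_inter, Finset.mul_sum]
  have hc : ((1 : ℝ) / n) ^ 2 * (2 * ∑ i ∈ T, V i)
      = (2 / (n : ℝ) ^ 2) * ∑ i ∈ T, V i := by
    field_simp
  have key : covFlip P n W T = covFlip P n W ∅ + (2 / (n : ℝ) ^ 2) * ∑ i ∈ T, V i := by
    rw [hT, hsum, mul_add, ← hE, hc]
  have hVnn : ∀ i, 0 ≤ V i := fun i => var_nonneg P (hW i)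
  refine ⟨key, ?_, ?_⟩
  · rw [key]
    have : 0 ≤ (2 / (n : ℝ) ^ 2) * ∑ i ∈ T, V i :=
      mul_nonneg (by positivity) (Finset.sum_nonneg fun i _ => hVnn i)
    linarith
  · rintro ⟨i, hiT, hi⟩
    rw [key]
    have hpos : 0 < ∑ i ∈ T, V i :=
      Finset.sum_pos' (fun j _ => hVnn j) ⟨i, hiT, hi⟩
    have : 0 < (2 / (n : ℝ) ^ 2) * ∑ i ∈ T, V i :=
      mul_pos (by positivity) hpos
    linarith
end
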